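/- arXiv:2102.09705 — 2 statements merged into one kernel-verified Lean document; each statement's English description precedes it below -/
import Mathlib

section
/- Let θ₁, θ₂, … be a sequence of real numbers and y_n ~ N(θ_n, 1) independent. For each N ≥ 3, let Y_N = (y₁,…,y_N), τ²_N := N^{-1} Σ_{n=1}^N θ_n², and τ̂²_N := ‖Y_N‖²/(N−2) − 1. If the sequence τ²₁, τ²₂, … is bounded, then the sequence √N (τ̂²_N − τ²_N) is bounded in probability: for every ε > 0 there exists M < ∞ such that for all sufficiently large N, P[ √N |τ̂²_N − τ²_N| > M ] < ε. -/
open MeasureTheory ProbabilityTheory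

noncomputable section

/-- The law of `Y_N = (y₁,…,y_N)` with `y_n ~ N(θ_n, 1)` independent. -/
def obsLaw (θ : ℕ → ℝ) (N : ℕ) : Measure (Fin N → ℝ) :=
  Measure.pi fun n => gaussianReal (θ n) 1

/-- `τ²_N := N⁻¹ ∑_{n<N} θ_n²`. -/
def tau2 (θ : ℕ → ℝ) (N : ℕ) : ℝ := (∑ n : Fin N, θ n ^ 2) / N

/-- The James–Stein prior-variance estimate `τ̂²_N := ‖Y_N‖²/(N−2) − 1`. -/
def tauHat2 {N : ℕ} (y : Fin N → ℝ) : ℝ := (∑ n, y n ^ 2) / ((N : ℝ) - 2) - 1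


section AuxiliaryLemmas
open Real Function Set
open scoped ENNReal NNReal



lemma integrable_pow_mul_gauss (n : ℕ) :
    Integrable (fun x : ℝ => x ^ n * rexp (-x ^ 2 / 2)) := by
  have hint : Integrable (fun x : ℝ => (n.factorial * rexp 1) * rexp (-4⁻¹ * x ^ 2)) :=
    (integrable_exp_neg_mul_sq (by norm_num)).const_mul _
  refine hint.mono' ?_ (Filter.Eventually.of_forall fun x => ?_)
  · exact ((continuous_pow n).mul (((continuous_pow 2).neg.div_const 2).rexp)).aestronglyMeasurable
  · have h1 : |x| ^ n ≤ n.factorial * rexp |x| := by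
      have := Real.pow_div_factorial_le_exp (x := |x|) (abs_nonneg x) n
      rw [div_le_iff₀ (by positivity)] at this
      linarith [this]
    have h2 : rexp |x| * rexp (-x ^ 2 / 2) ≤ rexp 1 * rexp (-4⁻¹ * x ^ 2) := by
      rw [← Real.exp_add, ← Real.exp_add]
      apply Real.exp_le_exp.2
      nlinarith [sq_nonneg (|x| - 2), sq_abs x]
    calc ‖x ^ n * rexp (-x ^ 2 / 2)‖ = |x| ^ n * rexp (-x ^ 2 / 2) := by
          rw [norm_mul, norm_pow, Real.norm_eq_abs, Real.norm_eq_abs, Real.abs_exp]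
      _ ≤ (n.factorial * rexp |x|) * rexp (-x ^ 2 / 2) := by
          apply mul_le_mul_of_nonneg_right h1 (Real.exp_nonneg _)
      _ = n.factorial * (rexp |x| * rexp (-x ^ 2 / 2)) := by ring
      _ ≤ n.factorial * (rexp 1 * rexp (-4⁻¹ * x ^ 2)) := by
          apply mul_le_mul_of_nonneg_left h2 (by positivity)
      _ = (n.factorial * rexp 1) * rexp (-4⁻¹ * x ^ 2) := by ring

lemma gauss_rec (n : ℕ) :
    ∫ x : ℝ, x ^ (n + 1) * rexp (-x ^ 2 / 2) =
      n * ∫ x : ℝ, x ^ (n - 1) * rexp (-x ^ 2 / 2) := by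
  have hv : ∀ x : ℝ, HasDerivAt (fun x : ℝ => -rexp (-x ^ 2 / 2)) (x * rexp (-x ^ 2 / 2)) x := by
    intro x
    have h1 : HasDerivAt (fun x : ℝ => -x ^ 2 / 2) (-x) x := by
      have := ((hasDerivAt_pow 2 x).neg.div_const 2)
      refine this.congr_deriv ?_
      simp
      ring
    have h2 := h1.exp
    exact h2.neg.congr_deriv (by ring)
  have hu : ∀ x : ℝ, HasDerivAt (fun x : ℝ => x ^ n) ((n : ℝ) * x ^ (n - 1)) x :=
    fun x => hasDerivAt_pow n x
  have key := integral_mul_deriv_eq_deriv_mul_of_integrable (fun x _ => hu x) (fun x _ => hv x)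
    ((integrable_pow_mul_gauss (n + 1)).congr (Filter.Eventually.of_forall fun x => by
      simp only [Pi.mul_apply]; ring))
    (((integrable_pow_mul_gauss (n - 1)).const_mul (-(n:ℝ))).congr
      (Filter.Eventually.of_forall fun x => by simp only [Pi.mul_apply]; ring))
    ((integrable_pow_mul_gauss n).neg.congr
      (Filter.Eventually.of_forall fun x => by simp only [Pi.mul_apply, Pi.neg_apply]; ring))
  calc ∫ x : ℝ, x ^ (n + 1) * rexp (-x ^ 2 / 2)
      = ∫ x : ℝ, x ^ n * (x * rexp (-x ^ 2 / 2)) := by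
        congr 1; funext x; ring
    _ = -∫ x : ℝ, ((n : ℝ) * x ^ (n - 1)) * (-rexp (-x ^ 2 / 2)) := key
    _ = ∫ x : ℝ, (n : ℝ) * (x ^ (n - 1) * rexp (-x ^ 2 / 2)) := by
        rw [← integral_neg]; congr 1; funext x; ring
    _ = n * ∫ x : ℝ, x ^ (n - 1) * rexp (-x ^ 2 / 2) := integral_const_mul _ _

lemma gauss_I0 : ∫ x : ℝ, rexp (-x ^ 2 / 2) = Real.sqrt (2 * π) := by
  have : ∀ x : ℝ, -x ^ 2 / 2 = -(2⁻¹ : ℝ) * x ^ 2 := fun x => by ring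
  simp_rw [this, integral_gaussian]
  rw [show (π / 2⁻¹ : ℝ) = 2 * π by ring]





lemma gauss_I1 : ∫ x : ℝ, x ^ 1 * rexp (-x ^ 2 / 2) = 0 := by
  have := gauss_rec 0; simpa using this

lemma gauss_I2 : ∫ x : ℝ, x ^ 2 * rexp (-x ^ 2 / 2) = Real.sqrt (2 * π) := by
  have := gauss_rec 1
  simp only [Nat.reduceAdd, Nat.sub_self, pow_zero] at this
  rw [this]
  simp only [Nat.cast_one, one_mul]
  simpa using gauss_I0

lemma gauss_I3 : ∫ x : ℝ, x ^ 3 * rexp (-x ^ 2 / 2) = 0 := by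
  have := gauss_rec 2
  norm_num at this
  rw [this]
  have h1 := gauss_I1
  simp only [pow_one] at h1
  rw [h1]; ring

lemma gauss_I4 : ∫ x : ℝ, x ^ 4 * rexp (-x ^ 2 / 2) = 3 * Real.sqrt (2 * π) := by
  have := gauss_rec 3
  norm_num at this
  rw [this, gauss_I2]





lemma gaussianPDFReal_one (θ x : ℝ) :
    gaussianPDFReal θ 1 x = (Real.sqrt (2 * π))⁻¹ * rexp (-(x - θ) ^ 2 / 2) := by
  simp [gaussianPDFReal]

lemma sqrt_two_pi_pos : 0 < Real.sqrt (2 * π) :=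
  Real.sqrt_pos.2 (by positivity)

lemma integral_gaussianReal_one (θ : ℝ) (f : ℝ → ℝ) :
    ∫ x, f x ∂(gaussianReal θ 1) = ∫ x, gaussianPDFReal θ 1 x * f x := by
  rw [gaussianReal_of_var_ne_zero _ one_ne_zero]
  have h : gaussianPDF θ 1 = fun x => ((gaussianPDFReal θ 1 x).toNNReal : ℝ≥0∞) := rfl
  rw [h, integral_withDensity_eq_integral_smul
    (measurable_gaussianPDFReal θ 1).real_toNNReal f]
  congr 1
  funext x
  rw [NNReal.smul_def, Real.coe_toNNReal _ (gaussianPDFReal_nonneg θ 1 x), smul_eq_mul]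

lemma integrable_shift_pow (θ : ℝ) (k : ℕ) :
    Integrable (fun t : ℝ => (t + θ) ^ k * rexp (-t ^ 2 / 2)) := by
  have h : (fun t : ℝ => (t + θ) ^ k * rexp (-t ^ 2 / 2)) =
      fun t => ∑ j ∈ Finset.range (k + 1),
        (θ ^ (k - j) * (k.choose j : ℝ)) * (t ^ j * rexp (-t ^ 2 / 2)) := by
    funext t
    rw [add_pow, Finset.sum_mul]
    exact Finset.sum_congr rfl fun j _ => by ring
  rw [h]
  exact integrable_finset_sum _ fun j _ => (integrable_pow_mul_gauss j).const_mul _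

lemma integrable_pow_shift (θ : ℝ) (k : ℕ) :
    Integrable (fun x : ℝ => x ^ k * rexp (-(x - θ) ^ 2 / 2)) := by
  have := (integrable_shift_pow θ k).comp_sub_right θ
  refine this.congr (Filter.Eventually.of_forall fun x => ?_)
  simp [sub_add_cancel]

lemma integral_pow_gaussianReal (θ : ℝ) (k : ℕ) :
    ∫ x, x ^ k ∂(gaussianReal θ 1) =
      (Real.sqrt (2 * π))⁻¹ * ∫ x : ℝ, (x + θ) ^ k * rexp (-x ^ 2 / 2) := by
  rw [integral_gaussianReal_one]
  have h : (fun x : ℝ => gaussianPDFReal θ 1 x * x ^ k) =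
      fun x => (Real.sqrt (2 * π))⁻¹ * (x ^ k * rexp (-(x - θ) ^ 2 / 2)) := by
    funext x; rw [gaussianPDFReal_one]; ring
  rw [h, integral_const_mul]
  congr 1
  have h2 : ∀ x : ℝ, x ^ k * rexp (-(x - θ) ^ 2 / 2) =
      (fun t : ℝ => (t + θ) ^ k * rexp (-t ^ 2 / 2)) (x - θ) := by
    intro x; simp [sub_add_cancel]
  simp_rw [h2]
  rw [integral_sub_right_eq_self (fun t : ℝ => (t + θ) ^ k * rexp (-t ^ 2 / 2)) θ]

lemma integrable_pow_gaussianReal (θ : ℝ) (k : ℕ) :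
    Integrable (fun x : ℝ => x ^ k) (gaussianReal θ 1) := by
  rw [gaussianReal_of_var_ne_zero _ one_ne_zero]
  have h : gaussianPDF θ 1 = fun x => ((gaussianPDFReal θ 1 x).toNNReal : ℝ≥0∞) := rfl
  rw [h, integrable_withDensity_iff_integrable_smul
    (measurable_gaussianPDFReal θ 1).real_toNNReal]
  have h2 : (fun x : ℝ => (gaussianPDFReal θ 1 x).toNNReal • x ^ k) =
      fun x => (Real.sqrt (2 * π))⁻¹ * (x ^ k * rexp (-(x - θ) ^ 2 / 2)) := by
    funext x
    rw [NNReal.smul_def, Real.coe_toNNReal _ (gaussianPDFReal_nonneg θ 1 x), smul_eq_mul,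
      gaussianPDFReal_one]
    ring
  rw [h2]
  exact (integrable_pow_shift θ k).const_mul _

lemma integral_sq_gaussianReal (θ : ℝ) :
    ∫ x, x ^ 2 ∂(gaussianReal θ 1) = θ ^ 2 + 1 := by
  rw [integral_pow_gaussianReal]
  have h : (fun x : ℝ => (x + θ) ^ 2 * rexp (-x ^ 2 / 2)) =
      fun x => x ^ 2 * rexp (-x ^ 2 / 2) +
        ((2 * θ) * (x ^ 1 * rexp (-x ^ 2 / 2)) + (θ ^ 2) * (rexp (-x ^ 2 / 2))) := by
    funext x; ring
  have i0 : Integrable (fun x : ℝ => rexp (-x ^ 2 / 2)) :=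
    (integrable_pow_mul_gauss 0).congr (Filter.Eventually.of_forall fun x => by simp)
  have iA : Integrable (fun x : ℝ => x ^ 2 * rexp (-x ^ 2 / 2)) := integrable_pow_mul_gauss 2
  have iB : Integrable (fun x : ℝ => 2 * θ * (x ^ 1 * rexp (-x ^ 2 / 2))) :=
    (integrable_pow_mul_gauss 1).const_mul _
  have iC : Integrable (fun x : ℝ => θ ^ 2 * rexp (-x ^ 2 / 2)) := i0.const_mul _
  have iBC : Integrable (fun x : ℝ =>
      2 * θ * (x ^ 1 * rexp (-x ^ 2 / 2)) + θ ^ 2 * rexp (-x ^ 2 / 2)) := iB.add iC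
  rw [h, integral_add iA iBC, integral_add iB iC,
    integral_const_mul, integral_const_mul, gauss_I1, gauss_I2, gauss_I0]
  have := sqrt_two_pi_pos.ne'
  field_simp
  ring

lemma integral_pow4_gaussianReal (θ : ℝ) :
    ∫ x, x ^ 4 ∂(gaussianReal θ 1) = θ ^ 4 + 6 * θ ^ 2 + 3 := by
  rw [integral_pow_gaussianReal]
  have h : (fun x : ℝ => (x + θ) ^ 4 * rexp (-x ^ 2 / 2)) =
      fun x => x ^ 4 * rexp (-x ^ 2 / 2) +
        ((4 * θ) * (x ^ 3 * rexp (-x ^ 2 / 2)) +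
          ((6 * θ ^ 2) * (x ^ 2 * rexp (-x ^ 2 / 2)) +
            ((4 * θ ^ 3) * (x ^ 1 * rexp (-x ^ 2 / 2)) +
              (θ ^ 4) * (rexp (-x ^ 2 / 2))))) := by
    funext x; ring
  have i0 : Integrable (fun x : ℝ => rexp (-x ^ 2 / 2)) :=
    (integrable_pow_mul_gauss 0).congr (Filter.Eventually.of_forall fun x => by simp)
  have iA : Integrable (fun x : ℝ => x ^ 4 * rexp (-x ^ 2 / 2)) := integrable_pow_mul_gauss 4
  have iB : Integrable (fun x : ℝ => 4 * θ * (x ^ 3 * rexp (-x ^ 2 / 2))) :=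
    (integrable_pow_mul_gauss 3).const_mul _
  have iC : Integrable (fun x : ℝ => 6 * θ ^ 2 * (x ^ 2 * rexp (-x ^ 2 / 2))) :=
    (integrable_pow_mul_gauss 2).const_mul _
  have iD : Integrable (fun x : ℝ => 4 * θ ^ 3 * (x ^ 1 * rexp (-x ^ 2 / 2))) :=
    (integrable_pow_mul_gauss 1).const_mul _
  have iE : Integrable (fun x : ℝ => θ ^ 4 * rexp (-x ^ 2 / 2)) := i0.const_mul _
  have iDE : Integrable (fun x : ℝ =>
      4 * θ ^ 3 * (x ^ 1 * rexp (-x ^ 2 / 2)) + θ ^ 4 * rexp (-x ^ 2 / 2)) := iD.add iE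
  have iCDE : Integrable (fun x : ℝ =>
      6 * θ ^ 2 * (x ^ 2 * rexp (-x ^ 2 / 2)) +
        (4 * θ ^ 3 * (x ^ 1 * rexp (-x ^ 2 / 2)) + θ ^ 4 * rexp (-x ^ 2 / 2))) := iC.add iDE
  have iBCDE : Integrable (fun x : ℝ =>
      4 * θ * (x ^ 3 * rexp (-x ^ 2 / 2)) +
        (6 * θ ^ 2 * (x ^ 2 * rexp (-x ^ 2 / 2)) +
          (4 * θ ^ 3 * (x ^ 1 * rexp (-x ^ 2 / 2)) + θ ^ 4 * rexp (-x ^ 2 / 2)))) := iB.add iCDE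
  rw [h, integral_add iA iBCDE, integral_add iB iCDE, integral_add iC iDE, integral_add iD iE,
    integral_const_mul, integral_const_mul, integral_const_mul, integral_const_mul,
    gauss_I1, gauss_I2, gauss_I3, gauss_I4, gauss_I0]
  have := sqrt_two_pi_pos.ne'
  field_simp
  ring

lemma memLp_sq_gaussianReal (θ : ℝ) :
    MemLp (fun x : ℝ => x ^ 2) 2 (gaussianReal θ 1) := by
  rw [memLp_two_iff_integrable_sq
    ((continuous_pow 2).aestronglyMeasurable)]
  refine (integrable_pow_gaussianReal θ 4).congr (Filter.Eventually.of_forall fun x => ?_)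
  simp [Pi.pow_apply]
  ring




variable {N : ℕ} (μ : Fin N → Measure ℝ) [∀ n, IsProbabilityMeasure (μ n)]

lemma map_eval_pi (n : Fin N) : (Measure.pi μ).map (Function.eval n) = μ n := by
  ext s hs
  rw [Measure.map_apply (measurable_pi_apply n) hs, Set.eval_preimage, Measure.pi_pi]
  have h : ∀ i : Fin N, i ≠ n → μ i (Function.update (fun _ => Set.univ) n s i) = 1 := by
    intro i hi
    rw [Function.update_of_ne hi]
    exact measure_univ
  calc ∏ i, μ i (Function.update (fun _ => Set.univ) n s i)
      = ∏ i ∈ {n}, μ i (Function.update (fun _ => Set.univ) n s i) := by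
        refine (Finset.prod_subset (Finset.subset_univ _) fun i _ hi => ?_).symm
        exact h i (by simpa using hi)
    _ = μ n s := by simp

lemma measurePreserving_eval_pi (n : Fin N) :
    MeasurePreserving (Function.eval n) (Measure.pi μ) (μ n) :=
  ⟨measurable_pi_apply n, map_eval_pi μ n⟩

lemma indepFun_eval_pi {i j : Fin N} (hij : i ≠ j) :
    IndepFun (Function.eval i) (Function.eval j) (Measure.pi μ) := by
  rw [indepFun_iff_measure_inter_preimage_eq_mul]
  intro s t hs ht
  have key : Function.eval i ⁻¹' s ∩ Function.eval j ⁻¹' t =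
      Set.pi Set.univ (Function.update (Function.update (fun _ : Fin N => (Set.univ : Set ℝ)) i s) j t) := by
    ext y
    simp only [Set.mem_inter_iff, Set.mem_preimage, Set.mem_pi, Set.mem_univ, true_implies]
    constructor
    · rintro ⟨hys, hyt⟩ k
      rcases eq_or_ne k j with rfl | hkj
      · rwa [Function.update_self]
      rcases eq_or_ne k i with rfl | hki
      · rwa [Function.update_of_ne hkj, Function.update_self]
      · rw [Function.update_of_ne hkj, Function.update_of_ne hki]
        trivial
    · intro hy
      constructor
      · have := hy i
        rwa [Function.update_of_ne hij, Function.update_self] at this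
      · have := hy j
        rwa [Function.update_self] at this
  rw [key, Measure.pi_pi]
  have hs' : Measure.pi μ (Function.eval i ⁻¹' s) = μ i s := by
    rw [← Measure.map_apply (measurable_pi_apply i) hs, map_eval_pi]
  have ht' : Measure.pi μ (Function.eval j ⁻¹' t) = μ j t := by
    rw [← Measure.map_apply (measurable_pi_apply j) ht, map_eval_pi]
  rw [hs', ht']
  set F := Function.update (Function.update (fun _ : Fin N => (Set.univ : Set ℝ)) i s) j t
  calc ∏ k, μ k (F k) = ∏ k ∈ ({i, j} : Finset (Fin N)), μ k (F k) := by
        refine (Finset.prod_subset (Finset.subset_univ _) fun k _ hk => ?_).symm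
        simp only [Finset.mem_insert, Finset.mem_singleton, not_or] at hk
        have : F k = Set.univ := by
          simp only [F]; rw [Function.update_of_ne hk.2, Function.update_of_ne hk.1]
        rw [this]; exact measure_univ
    _ = μ i (F i) * μ j (F j) := Finset.prod_pair hij
    _ = μ i s * μ j t := by
        have hFi : F i = s := by
          simp only [F]; rw [Function.update_of_ne hij, Function.update_self]
        have hFj : F j = t := by simp only [F]; rw [Function.update_self]
        rw [hFi, hFj]


end AuxiliaryLemmas

section Coord

variable (θ : ℕ → ℝ) {N : ℕ} (n : Fin N)

lemma obsLaw_def : obsLaw θ N = Measure.pi fun n : Fin N => gaussianReal (θ n) 1 := rfl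

instance : IsProbabilityMeasure (obsLaw θ N) := by
  rw [obsLaw_def]; infer_instance

lemma integral_coord_pow (k : ℕ) :
    ∫ y, y n ^ k ∂(obsLaw θ N) = ∫ x, x ^ k ∂(gaussianReal (θ n) 1) := by
  rw [obsLaw_def, ← map_eval_pi (fun n => gaussianReal (θ n) 1) n,
    integral_map (measurable_pi_apply n).aemeasurable
      (by rw [map_eval_pi (fun n => gaussianReal (θ n) 1) n]
          exact (continuous_pow k).aestronglyMeasurable)]

lemma memLp_coord_sq : MemLp (fun y : Fin N → ℝ => y n ^ 2) 2 (obsLaw θ N) := by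
  rw [obsLaw_def]
  exact (memLp_sq_gaussianReal (θ n)).comp_measurePreserving
    (measurePreserving_eval_pi (fun n => gaussianReal (θ n) 1) n)

lemma variance_coord_sq :
    variance (fun y : Fin N → ℝ => y n ^ 2) (obsLaw θ N) = 4 * θ n ^ 2 + 2 := by
  rw [variance_eq_sub (memLp_coord_sq θ n)]
  have h1 : (fun y : Fin N → ℝ => y n ^ 2) ^ 2 = fun y : Fin N → ℝ => y n ^ 4 := by
    funext y; simp [Pi.pow_apply]; ring
  rw [h1, integral_coord_pow θ n 4, integral_coord_pow θ n 2,
    integral_pow4_gaussianReal, integral_sq_gaussianReal]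
  ring

end Coord

lemma key_id (sN s t2 Nr tot : ℝ) (h : Nr - 2 ≠ 0) :
    sN * ((s / (Nr - 2) - 1) - t2) =
      (sN / (Nr - 2) * s - sN / (Nr - 2) * tot) +
        (sN / (Nr - 2) * tot - sN * (1 + t2)) := by
  field_simp
  ring

lemma he_id (sN T Nr : ℝ) (hN : Nr ≠ 0) (h2 : Nr - 2 ≠ 0) :
    sN / (Nr - 2) * (T + Nr) - sN * (1 + T / Nr) = sN * (1 + T / Nr) * 2 / (Nr - 2) := by
  field_simp
  ring

lemma h3_id (Nr t2 : ℝ) (h2 : Nr - 2 ≠ 0) :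
    Nr / (Nr - 2) ^ 2 * (Nr * (4 * t2 + 2)) = (Nr / (Nr - 2)) ^ 2 * (4 * t2 + 2) := by
  field_simp

lemma h2_id (T Nr : ℝ) (h : Nr ≠ 0) : 4 * T + 2 * Nr = Nr * (4 * (T / Nr) + 2) := by
  field_simp

/-- **Lemma S6.** If the sequence `τ²_N` is bounded, then `√N (τ̂²_N − τ²_N)` is
bounded in probability: for every `ε > 0` there exists `M < ∞` such that for all
sufficiently large `N`, `P[√N |τ̂²_N − τ²_N| > M] < ε`. -/
theorem prior_variance_estimate_convergence (θ : ℕ → ℝ)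
    (hbdd : ∃ B : ℝ, ∀ N, tau2 θ N ≤ B) :
    ∀ ε > (0 : ℝ), ∃ M : ℝ, ∃ N₀ : ℕ, ∀ N ≥ N₀,
      obsLaw θ N {y | M < Real.sqrt N * |tauHat2 y - tau2 θ N|} <
        ENNReal.ofReal ε := by
  intro ε hε
  obtain ⟨B, hB⟩ := hbdd
  set B' : ℝ := max B 0 with hB'def
  have hB'0 : 0 ≤ B' := le_max_right _ _
  have hB' : ∀ N, tau2 θ N ≤ B' := fun N => (hB N).trans (le_max_left _ _)
  set V : ℝ := 4 * (4 * B' + 2) with hVdef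
  have hV0 : 0 < V := by positivity
  set c : ℝ := Real.sqrt (V / ε) + 1 with hcdef
  have hc0 : 0 < c := by positivity
  have hcsq : V / c ^ 2 < ε := by
    have h1 : Real.sqrt (V / ε) ^ 2 = V / ε := Real.sq_sqrt (by positivity)
    have h2 : V / ε < c ^ 2 := by nlinarith [Real.sqrt_nonneg (V / ε)]
    rw [div_lt_iff₀ (by positivity)]
    calc V = (V / ε) * ε := by field_simp
    _ < c ^ 2 * ε := by apply mul_lt_mul_of_pos_right h2 hε
    _ = ε * c ^ 2 := mul_comm _ _
  set K : ℝ := 2 * (B' + 1) with hKdef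
  have hK0 : 0 < K := by positivity
  refine ⟨c + 1, max ⌈4 * K ^ 2⌉₊ 8, fun N hN => ?_⟩
  -- basic numeric facts about N
  have hN8 : (8 : ℕ) ≤ N := le_trans (le_max_right _ _) hN
  have hN8' : (8 : ℝ) ≤ N := by exact_mod_cast hN8
  have hNpos : (0 : ℝ) < N := by linarith
  have hN2 : (0 : ℝ) < (N : ℝ) - 2 := by linarith
  have hsqrtN : (0:ℝ) ≤ Real.sqrt N := Real.sqrt_nonneg _
  have hsqN : Real.sqrt N ^ 2 = N := Real.sq_sqrt hNpos.le
  have hKN : K * Real.sqrt N ≤ (N : ℝ) - 2 := by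
    have h4K : 4 * K ^ 2 ≤ (N : ℝ) := by
      have := le_trans (le_max_left ⌈4 * K ^ 2⌉₊ 8) hN
      have h2 : (⌈4 * K ^ 2⌉₊ : ℝ) ≤ N := by exact_mod_cast this
      exact le_trans (Nat.le_ceil _) h2
    have hsq : 2 * K ≤ Real.sqrt N := by
      rw [show (2 * K) = Real.sqrt ((2 * K) ^ 2) from
        (Real.sqrt_sq (by positivity)).symm]
      apply Real.sqrt_le_sqrt
      nlinarith
    have hmm : 2 * K * Real.sqrt N ≤ Real.sqrt N * Real.sqrt N :=
      mul_le_mul_of_nonneg_right hsq hsqrtN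
    have hss : Real.sqrt N * Real.sqrt N = (N : ℝ) := Real.mul_self_sqrt hNpos.le
    nlinarith
  -- the measure and coordinate functions
  set π : Measure (Fin N → ℝ) := obsLaw θ N with hπ
  haveI : IsProbabilityMeasure π := by rw [hπ]; infer_instance
  set X : Fin N → (Fin N → ℝ) → ℝ := fun n y => y n ^ 2 with hX
  have hmem : ∀ n : Fin N, MemLp (X n) 2 π := fun n => memLp_coord_sq θ n
  have hint : ∀ n : Fin N, Integrable (X n) π := fun n => (hmem n).integrable one_le_two
  set T : ℝ := ∑ n : Fin N, θ n ^ 2 with hT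
  have hT0 : 0 ≤ T := Finset.sum_nonneg fun n _ => sq_nonneg _
  have htau : tau2 θ N = T / N := rfl
  have htau0 : 0 ≤ tau2 θ N := by rw [htau]; positivity
  have htauB : tau2 θ N ≤ B' := hB' N
  -- sum function
  set SS : (Fin N → ℝ) → ℝ := ∑ n : Fin N, X n with hSS
  have hSSapp : ∀ y, SS y = ∑ n : Fin N, y n ^ 2 := by
    intro y; rw [hSS]; simp [hX]
  have hmemSS : MemLp SS 2 π := memLp_finset_sum' _ fun n _ => hmem n
  have hintSS : Integrable SS π := hmemSS.integrable one_le_two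
  -- expectation of SS
  have hESS : ∫ y, SS y ∂π = T + N := by
    have : ∫ y, SS y ∂π = ∑ n : Fin N, ∫ y, X n y ∂π := by
      rw [hSS]
      have := integral_finset_sum (μ := π) Finset.univ (fun n _ => hint n)
      simpa using this
    rw [this]
    have h2 : ∀ n : Fin N, ∫ y, X n y ∂π = θ n ^ 2 + 1 := by
      intro n
      rw [hX, hπ, integral_coord_pow θ n 2, integral_sq_gaussianReal]
    rw [Finset.sum_congr rfl fun n _ => h2 n, Finset.sum_add_distrib]
    simp [hT]
  -- variance of SS
  have hVarSS : variance SS π = 4 * T + 2 * N := by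
    rw [hSS, IndepFun.variance_sum (fun n _ => hmem n) ?_]
    · have h2 : ∀ n : Fin N, variance (X n) π = 4 * θ n ^ 2 + 2 := by
        intro n; rw [hX, hπ]; exact variance_coord_sq θ n
      rw [Finset.sum_congr rfl fun n _ => h2 n, Finset.sum_add_distrib]
      simp [hT, Finset.mul_sum]
      ring
    · intro i _ j _ hij
      have := (indepFun_eval_pi (fun n => gaussianReal (θ n) 1) hij).comp
        (φ := fun x : ℝ => x ^ 2) (ψ := fun x : ℝ => x ^ 2)
        (measurable_id.pow_const 2) (measurable_id.pow_const 2)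
      exact this
  -- the scaled variable
  set a : ℝ := Real.sqrt N / ((N : ℝ) - 2) with ha
  have ha0 : 0 ≤ a := div_nonneg hsqrtN hN2.le
  set Y : (Fin N → ℝ) → ℝ := fun y => a * SS y with hY
  have hmemY : MemLp Y 2 π := hmemSS.const_mul a
  have hEY : ∫ y, Y y ∂π = a * (T + N) := by
    rw [hY]; rw [integral_const_mul, hESS]
  have hVarY : variance Y π = a ^ 2 * (4 * T + 2 * N) := by
    rw [hY, variance_const_mul, hVarSS]
  have hVarYV : variance Y π ≤ V := by
    rw [hVarY]
    have h1 : a ^ 2 = N / ((N:ℝ) - 2) ^ 2 := by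
      rw [ha, div_pow, hsqN]
    have h2 : 4 * T + 2 * N = N * (4 * tau2 θ N + 2) := by
      rw [htau]; exact h2_id T N hNpos.ne'
    rw [h1, h2]
    have h3 : (N:ℝ) / ((N:ℝ) - 2) ^ 2 * (N * (4 * tau2 θ N + 2))
        = ((N:ℝ) / ((N:ℝ)-2)) ^ 2 * (4 * tau2 θ N + 2) := h3_id _ _ hN2.ne'
    rw [h3]
    have h4 : (N:ℝ) / ((N:ℝ)-2) ≤ 2 := by
      rw [div_le_iff₀ hN2]; linarith
    have h5 : (0:ℝ) ≤ (N:ℝ) / ((N:ℝ)-2) := by positivity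
    have h6 : ((N:ℝ) / ((N:ℝ)-2)) ^ 2 ≤ 4 := by
      calc ((N:ℝ) / ((N:ℝ)-2)) ^ 2 ≤ 2 ^ 2 := pow_le_pow_left₀ h5 h4 2
        _ = 4 := by norm_num
    have h7 : 4 * tau2 θ N + 2 ≤ 4 * B' + 2 := by linarith
    rw [hVdef]
    exact mul_le_mul h6 h7 (by positivity) (by norm_num)
  -- deviation of the mean
  have hd : |a * (T + N) - Real.sqrt N * (1 + tau2 θ N)| ≤ 1 := by
    have he : a * (T + N) - Real.sqrt N * (1 + tau2 θ N)
        = Real.sqrt N * (1 + tau2 θ N) * 2 / ((N:ℝ) - 2) := by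
      rw [ha, htau]; exact he_id _ _ _ hNpos.ne' hN2.ne'
    rw [he, abs_of_nonneg (by positivity)]
    rw [div_le_one hN2]
    calc Real.sqrt N * (1 + tau2 θ N) * 2 ≤ Real.sqrt N * (1 + B') * 2 := by
          have : (1 : ℝ) + tau2 θ N ≤ 1 + B' := by linarith
          exact mul_le_mul_of_nonneg_right
            (mul_le_mul_of_nonneg_left this hsqrtN) (by norm_num)
      _ = K * Real.sqrt N := by rw [hKdef]; ring
      _ ≤ (N:ℝ) - 2 := hKN
  -- event inclusion
  have hsub : {y : Fin N → ℝ | c + 1 < Real.sqrt N * |tauHat2 y - tau2 θ N|}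
      ⊆ {y : Fin N → ℝ | c ≤ |Y y - ∫ z, Y z ∂π|} := by
    intro y hy
    simp only [Set.mem_setOf_eq] at hy ⊢
    have hid : Real.sqrt N * (tauHat2 y - tau2 θ N)
        = (Y y - ∫ z, Y z ∂π) + (a * (T + N) - Real.sqrt N * (1 + tau2 θ N)) := by
      rw [hEY, hY, ha]
      show Real.sqrt N * (tauHat2 y - tau2 θ N) = _
      rw [show tauHat2 y = SS y / ((N:ℝ) - 2) - 1  by rw [tauHat2, hSSapp]]
      exact key_id _ _ _ _ _ hN2.ne'
    have habs : Real.sqrt N * |tauHat2 y - tau2 θ N|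
        = |Real.sqrt N * (tauHat2 y - tau2 θ N)| := by
      rw [abs_mul, abs_of_nonneg hsqrtN]
    rw [habs, hid] at hy
    have := abs_add_le (Y y - ∫ z, Y z ∂π) (a * (T + N) - Real.sqrt N * (1 + tau2 θ N))
    have h2 : c + 1 < |Y y - ∫ z, Y z ∂π| + 1 := by
      calc c + 1 < _ := hy
        _ ≤ |Y y - ∫ z, Y z ∂π| + |a * (T + N) - Real.sqrt N * (1 + tau2 θ N)| := this
        _ ≤ |Y y - ∫ z, Y z ∂π| + 1 := by linarith
    linarith
  -- Chebyshev
  have hcheb := meas_ge_le_variance_div_sq (μ := π) hmemY hc0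
  calc π {y | c + 1 < Real.sqrt N * |tauHat2 y - tau2 θ N|}
      ≤ π {y | c ≤ |Y y - ∫ z, Y z ∂π|} := measure_mono hsub
    _ ≤ ENNReal.ofReal (variance Y π / c ^ 2) := hcheb
    _ < ENNReal.ofReal ε := by
        rw [ENNReal.ofReal_lt_ofReal_iff hε]
        calc variance Y π / c ^ 2 ≤ V / c ^ 2 := by gcongr
          _ < ε := hcsq

end
end

section
/- Let θ₁, θ₂, … be reals, y_n ~ N(θ_n, 1) independent, and for each N ≥ 3 let Y_N = (y₁,…,y_N), Θ_N = (θ₁,…,θ_N), τ²_N := N^{-1} Σ θ_n², and τ̂²_N := ‖Y_N‖²/(N−2) − 1. Define the James–Stein estimate Θ*_N := (1 − 1/(1+τ̂²_N)) Y_N, the scaled win W_N := N^{-1/2}[ ‖Y_N − Θ_N‖² − ‖Θ*_N − Θ_N‖² ], and for α ∈ [0,1] the bound b_N(Y_N, α) := N^{-1/2} { inf_{λ ∈ [0, U(Y_N,(1−α)/2)]} (2/(1+τ̂²_N)) F⁻¹_N((1−α)/2; λ/4) − λ/(2(1+τ̂²_N)) − ‖Y_N‖²/(1+τ̂²_N)²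 }, where U(Y_N, β) := inf{δ ≥ 0 : ‖Y_N‖² ≤ F⁻¹_N(β; δ)}. If the sequence τ²₁, τ²₂, … is bounded, then for every α ∈ (0,1), liminf_{N→∞} P[ W_N ≥ b_N(Y_N, α) ] ≥ α. -/
open MeasureTheory ProbabilityTheory

noncomputable section

/-- Product of `n` standard Gaussians: the standard Gaussian `N(0, I_n)` on `ℝ^n`. -/
def stdGaussianPi (n : ℕ) : Measure (Fin n → ℝ) :=
  Measure.pi fun _ => gaussianReal 0 1

/-- Squared Euclidean norm on `ℝ^n`. -/
def sqNorm {n : ℕ} (v : Fin n → ℝ) : ℝ := ∑ i, (v i) ^ 2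

/-- The noncentral chi-squared distribution `χ²_k(lam)`: the law of `‖Z + μ‖²` for `Z`
standard Gaussian on `ℝ^k` and `μ` any vector with `‖μ‖² = lam`. -/
def ncChiSq (k : ℕ) (lam : ℝ) : Measure ℝ :=
  (stdGaussianPi k).map
    (fun z => ∑ i : Fin k, (z i + if i.val = 0 then Real.sqrt lam else 0) ^ 2)

/-- `F⁻¹_k(p; lam)`: the quantile function (generalized inverse CDF) of `χ²_k(lam)` at `p`. -/
def ncChiSqQuantile (k : ℕ) (lam p : ℝ) : ℝ :=
  sInf {x : ℝ | ENNReal.ofReal p ≤ ncChiSq k lam (Set.Iic x)}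

/-- The scaled win `W_N = N^{-1/2} (‖Y_N − Θ_N‖² − ‖Θ*_N − Θ_N‖²)` of the shrinkage
estimate `Θ*_N = (1 − 1/(1+t)) Y_N` over the MLE, with variance parameter `t`. -/
def jsWin (N : ℕ) (θ : ℕ → ℝ) (t : ℝ) (y : Fin N → ℝ) : ℝ :=
  (Real.sqrt N)⁻¹ *
    (sqNorm (fun n => y n - θ n) - sqNorm (fun n => (1 - 1 / (1 + t)) * y n - θ n))

/-- `U_N := inf{δ ≥ 0 : ‖Y_N‖² ≤ F⁻¹_N(β; δ)}`. -/
def jsU (N : ℕ) (y : Fin N → ℝ) (β : ℝ) : ℝ :=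
  sInf {δ : ℝ | 0 ≤ δ ∧ sqNorm y ≤ ncChiSqQuantile N δ β}

/-- The scaled lower bound `b_N` on the win, with variance parameter `t`. -/
def jsB (N : ℕ) (t α : ℝ) (y : Fin N → ℝ) : ℝ :=
  (Real.sqrt N)⁻¹ *
    sInf ((fun lam =>
        2 / (1 + t) * ncChiSqQuantile N (lam / 4) ((1 - α) / 2)
          - lam / (2 * (1 + t)) - sqNorm y / (1 + t) ^ 2) ''
      Set.Icc 0 (jsU N y ((1 - α) / 2)))

end

noncomputable section

def EuclideanSpace.measurableEquiv (ι : Type*) [Fintype ι] : EuclideanSpace ℝ ι ≃ᵐ (ι → ℝ) :=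
  (MeasurableEquiv.toLp 2 (ι → ℝ)).symm

lemma lintegral_pi_prod : ∀ (n : ℕ) (μ : Fin n → Measure ℝ), (∀ i, SigmaFinite (μ i)) →
    ∀ (f : Fin n → ℝ → ENNReal), (∀ i, Measurable (f i)) →
    ∫⁻ x, ∏ i, f i (x i) ∂(Measure.pi μ) = ∏ i, ∫⁻ t, f i t ∂(μ i) := by
  intro n
  induction n with
  | zero =>
    intro μ _ f _
    simp [Measure.pi_of_empty]
  | succ n ih =>
    intro μ hμ f hf
    haveI := hμ
    have mp := measurePreserving_piFinSuccAbove μ 0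
    set e := MeasurableEquiv.piFinSuccAbove (fun _ : Fin (n+1) => ℝ) 0 with he
    have h0 : Measure.pi μ
        = Measure.map e.symm ((μ 0).prod (Measure.pi fun j => μ ((0 : Fin (n+1)).succAbove j))) :=
      (mp.symm e).map_eq.symm
    rw [h0, MeasureTheory.lintegral_map_equiv]
    have h1 : ∀ p : ℝ × (Fin n → ℝ), ∏ i, f i (e.symm p i)
        = f 0 p.1 * (fun r : Fin n → ℝ => ∏ j, f ((0 : Fin (n+1)).succAbove j) (r j)) p.2 := by
      intro p
      rw [Fin.prod_univ_succ]
      simp_rw [he, MeasurableEquiv.piFinSuccAbove_symm_apply, Fin.insertNthEquiv,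
        Fin.insertNth_zero, Equiv.coe_fn_mk, Fin.cons_succ, Fin.zero_succAbove, Fin.cons_zero,
        cast_eq]
    have hg : Measurable (fun r : Fin n → ℝ => ∏ j, f ((0 : Fin (n+1)).succAbove j) (r j)) :=
      Finset.measurable_prod _ fun j _ => (hf _).comp (measurable_pi_apply j)
    rw [lintegral_congr h1,
      lintegral_prod_mul (f := f 0)
        (g := fun r : Fin n → ℝ => ∏ j, f ((0 : Fin (n+1)).succAbove j) (r j))
        (hf 0).aemeasurable hg.aemeasurable,
      ih _ (fun j => hμ _) _ (fun j => hf _), Fin.prod_univ_succ]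
    simp [Fin.zero_succAbove]


/-- Product of n standard gaussians as a density against Lebesgue. -/
lemma stdGaussianPi_eq_withDensity (n : ℕ) :
    Measure.pi (fun _ : Fin n => gaussianReal 0 1)
      = (volume : Measure (Fin n → ℝ)).withDensity (fun x => ∏ i, gaussianPDF 0 1 (x i)) := by
  refine Measure.pi_eq fun s hs => ?_
  have hFmeas : Measurable fun x : Fin n → ℝ => ∏ i, gaussianPDF 0 1 (x i) :=
    Finset.measurable_prod _ fun i _ => (measurable_gaussianPDF 0 1).comp (measurable_pi_apply i)
  rw [withDensity_apply _ (MeasurableSet.univ_pi hs), ← lintegral_indicator (MeasurableSet.univ_pi hs)]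
  have key : ∀ x : Fin n → ℝ, (Set.univ.pi s).indicator (fun x => ∏ i, gaussianPDF 0 1 (x i)) x
      = ∏ i, (s i).indicator (gaussianPDF 0 1) (x i) := by
    intro x
    by_cases hx : x ∈ Set.univ.pi s
    · rw [Set.indicator_of_mem hx]
      exact Finset.prod_congr rfl fun i _ =>
        (Set.indicator_of_mem (hx i (Set.mem_univ i)) _).symm
    · rw [Set.indicator_of_notMem hx]
      have hex : ∃ i, x i ∉ s i := by simpa [Set.mem_pi] using hx
      obtain ⟨i, hi⟩ := hex
      exact (Finset.prod_eq_zero (Finset.mem_univ i)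
        (by rw [Set.indicator_of_notMem hi])).symm
  rw [lintegral_congr key, volume_pi,
    lintegral_pi_prod n _ (fun _ => inferInstance) _
      (fun i => ((measurable_gaussianPDF 0 1).indicator (hs i)))]
  refine Finset.prod_congr rfl fun i _ => ?_
  rw [lintegral_indicator (hs i), gaussianReal_of_var_ne_zero 0 one_ne_zero,
    withDensity_apply _ (hs i)]

lemma map_withDensity_equiv {α β : Type*} [MeasurableSpace α] [MeasurableSpace β] (h : α ≃ᵐ β)
    (μ : Measure α) (f : α → ENNReal) (hf : Measurable f) :
    (μ.withDensity f).map h = (μ.map h).withDensity (fun b => f (h.symm b)) := by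
  ext s hs
  rw [MeasurableEquiv.map_apply, withDensity_apply _ (h.measurable hs), withDensity_apply _ hs,
    setLIntegral_map (f := fun b => f (h.symm b)) (g := ⇑h) hs
      (hf.comp h.symm.measurable) h.measurable]
  simp_rw [h.symm_apply_apply]

lemma sq_sum_eq_normsq {n : ℕ} (w : EuclideanSpace ℝ (Fin n)) : ∑ i, (w i)^2 = ‖w‖^2 := by
  rw [EuclideanSpace.norm_eq, Real.sq_sqrt (by positivity)]
  simp [Real.norm_eq_abs, sq_abs]

lemma prod_gaussianPDF_eq {n : ℕ} (x : Fin n → ℝ) :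
    ∏ i, gaussianPDF 0 1 (x i)
      = ENNReal.ofReal ((Real.sqrt (2*Real.pi))⁻¹ ^ n * Real.exp (-(∑ i, (x i)^2)/2)) := by
  have h1 : ∏ i, gaussianPDF 0 1 (x i) = ENNReal.ofReal (∏ i, gaussianPDFReal 0 1 (x i)) :=
    (ENNReal.ofReal_prod_of_nonneg (fun i _ => gaussianPDFReal_nonneg _ _ _)).symm
  rw [h1]
  congr 1
  simp only [gaussianPDFReal, NNReal.coe_one, mul_one, sub_zero]
  rw [Finset.prod_mul_distrib, Finset.prod_const, ← Real.exp_sum, Finset.card_univ,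
    Fintype.card_fin]
  congr 1
  rw [← Finset.sum_div, ← Finset.sum_neg_distrib]

/-- The standard Gaussian on Euclidean space, as a density against Lebesgue. -/
lemma stdGaussianE_eq (n : ℕ) :
    (stdGaussianPi n).map (EuclideanSpace.measurableEquiv (Fin n)).symm
      = (volume : Measure (EuclideanSpace ℝ (Fin n))).withDensity
        (fun w => ENNReal.ofReal ((Real.sqrt (2*Real.pi))⁻¹ ^ n * Real.exp (-‖w‖^2/2))) := by
  have hF : Measurable fun x : Fin n → ℝ => ∏ i, gaussianPDF 0 1 (x i) :=
    Finset.measurable_prod _ fun i _ => (measurable_gaussianPDF 0 1).comp (measurable_pi_apply i)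
  rw [show stdGaussianPi n = Measure.pi (fun _ : Fin n => gaussianReal 0 1) from rfl,
    stdGaussianPi_eq_withDensity n,
    map_withDensity_equiv (EuclideanSpace.measurableEquiv (Fin n)).symm _ _ hF,
    ((EuclideanSpace.volume_preserving_symm_measurableEquiv_toLp (Fin n)).symm
      (EuclideanSpace.measurableEquiv (Fin n))).map_eq]
  congr 1
  funext w
  rw [MeasurableEquiv.symm_symm]
  rw [prod_gaussianPDF_eq]
  congr 2
  have : ∀ i, (EuclideanSpace.measurableEquiv (Fin n)) w i = w i := fun i => rfl
  simp_rw [this]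
  rw [sq_sum_eq_normsq]

lemma stdGaussianE_measurable_density (n : ℕ) :
    Measurable (fun w : EuclideanSpace ℝ (Fin n) =>
      ENNReal.ofReal ((Real.sqrt (2*Real.pi))⁻¹ ^ n * Real.exp (-‖w‖^2/2))) := by
  apply ENNReal.measurable_ofReal.comp
  exact (continuous_const.mul ((continuous_norm.pow 2).neg.div_const 2).rexp).measurable

lemma stdGaussianE_map_isometry (n : ℕ)
    (T : EuclideanSpace ℝ (Fin n) ≃ₗᵢ[ℝ] EuclideanSpace ℝ (Fin n)) :
    ((stdGaussianPi n).map (EuclideanSpace.measurableEquiv (Fin n)).symm).map T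
      = (stdGaussianPi n).map (EuclideanSpace.measurableEquiv (Fin n)).symm := by
  rw [stdGaussianE_eq]
  set Tm : EuclideanSpace ℝ (Fin n) ≃ᵐ EuclideanSpace ℝ (Fin n) :=
    T.toHomeomorph.toMeasurableEquiv with hTm
  have hcoe : (T : EuclideanSpace ℝ (Fin n) → EuclideanSpace ℝ (Fin n)) = ⇑Tm := rfl
  rw [hcoe, map_withDensity_equiv Tm _ _ (stdGaussianE_measurable_density n)]
  have hvol : (volume : Measure (EuclideanSpace ℝ (Fin n))).map Tm = volume := by
    rw [← hcoe]; exact T.measurePreserving.map_eq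
  rw [hvol]
  congr 1
  funext w
  have : ‖(Tm.symm w : EuclideanSpace ℝ (Fin n))‖ = ‖w‖ := by
    have : Tm.symm w = T.symm w := rfl
    rw [this, LinearIsometryEquiv.norm_map]
  rw [this]

lemma map_add_norm {n : ℕ} (m : EuclideanSpace ℝ (Fin n)) :
    (stdGaussianPi n).map (fun z : Fin n → ℝ => ∑ i, (z i + m i)^2)
      = ((stdGaussianPi n).map (EuclideanSpace.measurableEquiv (Fin n)).symm).map
        (fun w : EuclideanSpace ℝ (Fin n) => ‖w + m‖^2) := by
  rw [Measure.map_map (by exact (continuous_norm.comp (continuous_add_right m)).pow 2 |>.measurable)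
    (EuclideanSpace.measurableEquiv (Fin n)).symm.measurable]
  congr 1
  funext z
  show ∑ i, (z i + m i)^2 = ‖(EuclideanSpace.measurableEquiv (Fin n)).symm z + m‖^2
  rw [← sq_sum_eq_normsq]
  rfl

lemma map_add_norm_eq_of_norm_eq {n : ℕ} (m m' : EuclideanSpace ℝ (Fin n)) (hmm : ‖m‖ = ‖m'‖) :
    (stdGaussianPi n).map (fun z : Fin n → ℝ => ∑ i, (z i + m i)^2)
      = (stdGaussianPi n).map (fun z : Fin n → ℝ => ∑ i, (z i + m' i)^2) := by
  rw [map_add_norm, map_add_norm]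
  set T := Submodule.reflection (Submodule.span ℝ {m - m'})ᗮ with hT
  have hTm : T m = m' := Submodule.reflection_sub hmm
  have h1 : (fun w : EuclideanSpace ℝ (Fin n) => ‖w + m‖^2)
      = (fun w : EuclideanSpace ℝ (Fin n) => ‖w + m'‖^2) ∘ T := by
    funext w
    show ‖w + m‖^2 = ‖T w + m'‖^2
    rw [← hTm, ← map_add, T.norm_map]
  rw [h1, ← Measure.map_map (by exact (continuous_norm.comp (continuous_add_right m')).pow 2
      |>.measurable) (by exact T.continuous.measurable),
    stdGaussianE_map_isometry]

lemma map_sq_sum_eq {n : ℕ} (hn : n ≠ 0) (μv : Fin n → ℝ) :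
    (stdGaussianPi n).map (fun z => ∑ i, (z i + μv i)^2) = ncChiSq n (∑ i, (μv i)^2) := by
  haveI : NeZero n := ⟨hn⟩
  set lam := ∑ i, (μv i)^2 with hlam
  have hlam0 : 0 ≤ lam := by positivity
  set e := EuclideanSpace.measurableEquiv (Fin n) with he
  set m : EuclideanSpace ℝ (Fin n) := e.symm μv with hm
  set μ0 : Fin n → ℝ := fun i => if (i : ℕ) = 0 then Real.sqrt lam else 0 with hμ0
  set m' : EuclideanSpace ℝ (Fin n) := e.symm μ0 with hm'
  have hmc : ∀ i, m i = μv i := fun i => rfl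
  have hmc' : ∀ i, m' i = μ0 i := fun i => rfl
  have hsum' : ∑ i, (μ0 i)^2 = lam := by
    simp_rw [hμ0]
    have : ∀ i : Fin n, (if (i : ℕ) = 0 then Real.sqrt lam else 0)^2
        = if i = (0 : Fin n) then lam else 0 := by
      intro i
      have hiff : ((i:ℕ) = 0) ↔ i = 0 := by rw [Fin.ext_iff, Fin.val_zero]
      by_cases hc : i = 0
      · simp [hc, hiff.mpr hc, Real.sq_sqrt hlam0]
      · simp only [hiff, hc, if_false, if_neg hc]
        exact zero_pow two_ne_zero
    simp_rw [this]
    simp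
  have hnorm : ‖m‖ = ‖m'‖ := by
    rw [EuclideanSpace.norm_eq, EuclideanSpace.norm_eq]
    congr 1
    simp_rw [Real.norm_eq_abs, sq_abs, hmc, hmc']
    rw [hsum']
  have h1 : (stdGaussianPi n).map (fun z => ∑ i, (z i + μv i)^2)
      = (stdGaussianPi n).map (fun z => ∑ i, (z i + m i)^2) := by simp_rw [hmc]
  have h2 : ncChiSq n lam = (stdGaussianPi n).map (fun z => ∑ i, (z i + m' i)^2) := by
    unfold ncChiSq
    simp_rw [hmc']
    rfl
  rw [h1, h2, map_add_norm_eq_of_norm_eq m m' hnorm]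

lemma measurable_sq_sum {n : ℕ} (c : Fin n → ℝ) :
    Measurable (fun z : Fin n → ℝ => ∑ i, (z i + c i)^2) := by
  exact Finset.measurable_sum _ fun i _ => by
    fun_prop

lemma obsLaw_eq_map (θ : ℕ → ℝ) (N : ℕ) :
    obsLaw θ N = (stdGaussianPi N).map (fun z (i : Fin N) => z i + θ i) := by
  have hT : Measurable (fun z : Fin N → ℝ => fun i : Fin N => z i + θ i) :=
    measurable_pi_lambda _ fun i => (measurable_pi_apply i).add_const _
  refine (Measure.pi_eq fun s hs => ?_)
  rw [Measure.map_apply hT (MeasurableSet.univ_pi hs)]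
  have hpre : (fun z : Fin N → ℝ => fun i : Fin N => z i + θ i) ⁻¹' (Set.univ.pi s)
      = Set.univ.pi (fun i : Fin N => (· + θ i) ⁻¹' s i) := by
    ext z
    simp [Set.mem_pi]
  rw [hpre]
  show Measure.pi (fun _ : Fin N => gaussianReal 0 1) _ = _
  rw [Measure.pi_pi]
  refine Finset.prod_congr rfl fun i _ => ?_
  have := gaussianReal_map_add_const (μ := 0) (v := 1) (θ i)
  rw [zero_add] at this
  rw [← this, Measure.map_apply (measurable_add_const _) (hs i)]

lemma obsLaw_map_sqNorm (θ : ℕ → ℝ) (N : ℕ) (hN : N ≠ 0) :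
    (obsLaw θ N).map sqNorm = ncChiSq N (∑ i : Fin N, θ i ^ 2) := by
  rw [obsLaw_eq_map, Measure.map_map (by
      unfold sqNorm
      exact Finset.measurable_sum _ (fun i _ => (measurable_pi_apply i).pow_const 2))
    (measurable_pi_lambda _ fun i => (measurable_pi_apply i).add_const _)]
  have : (sqNorm ∘ fun z (i : Fin N) => z i + θ i)
      = fun z : Fin N → ℝ => ∑ i : Fin N, (z i + θ i)^2 := rfl
  rw [this, map_sq_sum_eq hN]

lemma obsLaw_map_half (θ : ℕ → ℝ) (N : ℕ) (hN : N ≠ 0) :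
    (obsLaw θ N).map (fun y => ∑ i : Fin N, (y i - θ i / 2)^2)
      = ncChiSq N ((∑ i : Fin N, θ i ^ 2) / 4) := by
  rw [obsLaw_eq_map, Measure.map_map (Finset.measurable_sum _ fun i _ =>
      ((measurable_pi_apply i).sub_const _).pow_const 2)
    (measurable_pi_lambda _ fun i => (measurable_pi_apply i).add_const _)]
  have h1 : ((fun y : Fin N → ℝ => ∑ i : Fin N, (y i - θ i / 2)^2) ∘ fun z (i : Fin N) => z i + θ i)
      = fun z : Fin N → ℝ => ∑ i : Fin N, (z i + θ i / 2)^2 := by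
    funext z
    show ∑ i : Fin N, (z i + θ i - θ i / 2)^2 = _
    refine Finset.sum_congr rfl fun i _ => by ring
  rw [h1, map_sq_sum_eq hN]
  congr 1
  rw [Finset.sum_div]
  refine Finset.sum_congr rfl fun i _ => by ring

lemma continuous_gaussianPDFReal01 : Continuous (gaussianPDFReal 0 1) := by
  rw [gaussianPDFReal_def]
  fun_prop

/-- 1D: shifting a standard Gaussian further from the origin decreases the mass of
`{a | (a+c)² ≤ u}`. -/
lemma gauss_shift_anti {s s' : ℝ} (u : ℝ) (hs : 0 ≤ s) (hss : s ≤ s') :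
    gaussianReal 0 1 {a | (a + s')^2 ≤ u} ≤ gaussianReal 0 1 {a | (a + s)^2 ≤ u} := by
  rcases lt_or_ge u 0 with hu | hu
  · have : {a : ℝ | (a + s')^2 ≤ u} = ∅ := by
      ext a; simp only [Set.mem_setOf_eq, Set.mem_empty_iff_false, iff_false]
      nlinarith [sq_nonneg (a + s')]
    simp [this]
  · have hset : ∀ c, {a : ℝ | (a + c)^2 ≤ u} = Set.Icc (-Real.sqrt u - c) (Real.sqrt u - c) := by
    -- membership by sqrt manipulation
      intro c
      ext a
      simp only [Set.mem_setOf_eq, Set.mem_Icc]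
      constructor
      · intro h
        have h1 : |a + c| ≤ Real.sqrt u := by
          rw [← Real.sqrt_sq_eq_abs]
          exact Real.sqrt_le_sqrt h
        rw [abs_le] at h1
        constructor <;> linarith [h1.1, h1.2]
      · intro ⟨h1, h2⟩
        have h3 : |a + c| ≤ Real.sqrt u := abs_le.mpr ⟨by linarith, by linarith⟩
        have h4 : (a+c)^2 = |a+c|^2 := (sq_abs _).symm
        rw [h4]
        calc |a+c|^2 ≤ (Real.sqrt u)^2 := by
              exact pow_le_pow_left₀ (abs_nonneg _) h3 2
          _ = u := Real.sq_sqrt hu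
    set pdf := gaussianPDFReal 0 1 with hpdf
    set G : ℝ → ℝ := fun x => ∫ t in (0:ℝ)..x, pdf t with hGdef
    have hG : ∀ x, HasDerivAt G (pdf x) x := fun x =>
      intervalIntegral.integral_hasDerivAt_right
        (continuous_gaussianPDFReal01.intervalIntegrable _ _)
        (continuous_gaussianPDFReal01.stronglyMeasurableAtFilter _ _)
        continuous_gaussianPDFReal01.continuousAt
    have hmeasIcc : ∀ a b : ℝ, a ≤ b →
        gaussianReal 0 1 (Set.Icc a b) = ENNReal.ofReal (G b - G a) := by
      intro a b hab
      rw [gaussianReal_apply_eq_integral 0 one_ne_zero _]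
      congr 1
      rw [MeasureTheory.integral_Icc_eq_integral_Ioc, ← intervalIntegral.integral_of_le hab]
      exact (intervalIntegral.integral_interval_sub_left
        (continuous_gaussianPDFReal01.intervalIntegrable _ _)
        (continuous_gaussianPDFReal01.intervalIntegrable _ _)).symm
    set H : ℝ → ℝ := fun c => G (Real.sqrt u - c) - G (-Real.sqrt u - c) with hHdef
    have hH : ∀ c, HasDerivAt H (pdf (Real.sqrt u - c) * (-1) - pdf (-Real.sqrt u - c) * (-1)) c := by
      intro c
      have d1 : HasDerivAt (fun c : ℝ => Real.sqrt u - c) (-1) c := by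
        simpa using (hasDerivAt_id c).const_sub (Real.sqrt u)
      have d2 : HasDerivAt (fun c : ℝ => -Real.sqrt u - c) (-1) c := by
        simpa using (hasDerivAt_id c).const_sub (-Real.sqrt u)
      exact ((hG _).comp c d1).sub ((hG _).comp c d2)
    have hHanti : AntitoneOn H (Set.Ici 0) := by
      refine antitoneOn_of_deriv_nonpos (convex_Ici 0) ?_ ?_ ?_
      · exact Continuous.continuousOn (continuous_iff_continuousAt.mpr
          (fun c => (hH c).differentiableAt.continuousAt))
      · exact fun c _ => (hH c).differentiableAt.differentiableWithinAt
      · intro c hc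
        rw [interior_Ici] at hc
        rw [(hH c).deriv]
        have heven : pdf (-Real.sqrt u - c) = pdf (Real.sqrt u + c) := by
          simp only [hpdf, gaussianPDFReal]
          congr 1
          rw [NNReal.coe_one]
          congr 1
          ring
        have hmono : pdf (Real.sqrt u + c) ≤ pdf (Real.sqrt u - c) := by
          simp only [hpdf, gaussianPDFReal, NNReal.coe_one, mul_one, sub_zero]
          refine mul_le_mul_of_nonneg_left ?_ (by positivity)
          refine Real.exp_le_exp.mpr ?_
          have : (Real.sqrt u - c)^2 ≤ (Real.sqrt u + c)^2 := by
            nlinarith [Real.sqrt_nonneg u, le_of_lt (Set.mem_Ioi.mp hc)]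
          linarith
        rw [heven]
        nlinarith [hmono]
    rw [hset s, hset s']
    rw [hmeasIcc _ _ (by nlinarith [Real.sqrt_nonneg u]),
      hmeasIcc _ _ (by nlinarith [Real.sqrt_nonneg u])]
    exact ENNReal.ofReal_le_ofReal (hHanti (Set.mem_Ici.mpr hs)
      (Set.mem_Ici.mpr (hs.trans hss)) hss)

lemma ncChiSq_apply (k : ℕ) (lam : ℝ) {A : Set ℝ} (hA : MeasurableSet A) :
    ncChiSq k lam A = stdGaussianPi k
      {z | (∑ i, (z i + if (i : ℕ) = 0 then Real.sqrt lam else 0)^2) ∈ A} := by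
  unfold ncChiSq
  rw [Measure.map_apply (measurable_sq_sum _) hA]
  rfl

/-- The noncentral chi-square CDF is antitone in the noncentrality parameter. -/
lemma ncChiSq_cdf_anti {n : ℕ} {lam lam' : ℝ} (h0 : 0 ≤ lam) (hll : lam ≤ lam') (x : ℝ) :
    ncChiSq (n+1) lam' (Set.Iic x) ≤ ncChiSq (n+1) lam (Set.Iic x) := by
  rw [ncChiSq_apply _ _ measurableSet_Iic, ncChiSq_apply _ _ measurableSet_Iic]
  have key : ∀ lam0 : ℝ,
      stdGaussianPi (n+1) {z | (∑ i, (z i + if (i : ℕ) = 0 then Real.sqrt lam0 else 0)^2) ∈ Set.Iic x}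
      = ∫⁻ r, gaussianReal 0 1 {a | (a + Real.sqrt lam0)^2 ≤ x - ∑ j, (r j)^2}
          ∂(Measure.pi fun _ : Fin n => gaussianReal 0 1) := by
    intro lam0
    set μpi := fun _ : Fin (n+1) => gaussianReal 0 1
    have mp := measurePreserving_piFinSuccAbove μpi 0
    set e := MeasurableEquiv.piFinSuccAbove (fun _ : Fin (n+1) => ℝ) 0 with he
    have hSmeas : MeasurableSet {z : Fin (n+1) → ℝ |
        (∑ i, (z i + if (i : ℕ) = 0 then Real.sqrt lam0 else 0)^2) ∈ Set.Iic x} :=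
      (measurable_sq_sum _) measurableSet_Iic
    have h1 : stdGaussianPi (n+1) {z | (∑ i, (z i + if (i : ℕ) = 0 then Real.sqrt lam0 else 0)^2) ∈ Set.Iic x}
        = ((gaussianReal 0 1).prod (Measure.pi fun _ : Fin n => gaussianReal 0 1))
          (⇑e.symm ⁻¹' {z | (∑ i, (z i + if (i : ℕ) = 0 then Real.sqrt lam0 else 0)^2) ∈ Set.Iic x}) := by
      show Measure.pi μpi _ = _
      rw [← (mp.symm e).map_eq, Measure.map_apply e.symm.measurable hSmeas]
    rw [h1]
    have hpre : (⇑e.symm ⁻¹' {z : Fin (n+1) → ℝ |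
        (∑ i, (z i + if (i : ℕ) = 0 then Real.sqrt lam0 else 0)^2) ∈ Set.Iic x})
        = {p : ℝ × (Fin n → ℝ) | (p.1 + Real.sqrt lam0)^2 + ∑ j, (p.2 j)^2 ≤ x} := by
      ext p
      simp only [Set.mem_preimage, Set.mem_setOf_eq, Set.mem_Iic]
      rw [Fin.sum_univ_succ]
      have h00 : e.symm p 0 = p.1 := by
        simp [he, MeasurableEquiv.piFinSuccAbove_symm_apply, Fin.insertNthEquiv,
          Fin.insertNth_zero]
      have hsucc : ∀ j : Fin n, e.symm p j.succ = p.2 j := by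
        intro j
        simp [he, MeasurableEquiv.piFinSuccAbove_symm_apply, Fin.insertNthEquiv,
          Fin.insertNth_zero]
      rw [h00]
      simp only [Fin.val_zero, if_pos rfl, Fin.val_succ, Nat.succ_ne_zero, if_false]
      have : ∀ j : Fin n, (e.symm p j.succ + 0)^2 = (p.2 j)^2 := by
        intro j; rw [hsucc]; ring
      rw [Finset.sum_congr rfl (fun j _ => this j)]
      simp
    rw [hpre, ← Measure.prod_swap]
    have hsw : Prod.swap ⁻¹' {p : ℝ × (Fin n → ℝ) | (p.1 + Real.sqrt lam0)^2 + ∑ j, (p.2 j)^2 ≤ x}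
        = {q : (Fin n → ℝ) × ℝ | (q.2 + Real.sqrt lam0)^2 + ∑ j, (q.1 j)^2 ≤ x} := rfl
    have hswm : MeasurableSet {q : (Fin n → ℝ) × ℝ | (q.2 + Real.sqrt lam0)^2 + ∑ j, (q.1 j)^2 ≤ x} :=
      measurableSet_le (((measurable_snd.add_const _).pow_const 2).add
        (Finset.measurable_sum _ fun j _ =>
          ((measurable_pi_apply j).comp measurable_fst).pow_const 2)) measurable_const
    have hAm : MeasurableSet {p : ℝ × (Fin n → ℝ) | (p.1 + Real.sqrt lam0)^2 + ∑ j, (p.2 j)^2 ≤ x} :=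
      measurableSet_le (((measurable_fst.add_const _).pow_const 2).add
        (Finset.measurable_sum _ fun j _ =>
          ((measurable_pi_apply j).comp measurable_snd).pow_const 2)) measurable_const
    rw [Measure.map_apply (s := {p : ℝ × (Fin n → ℝ) | (p.1 + Real.sqrt lam0)^2 + ∑ j, (p.2 j)^2 ≤ x})
      measurable_swap hAm, hsw, Measure.prod_apply hswm]
    refine lintegral_congr fun r => ?_
    congr 1
    ext a
    simp only [Set.mem_preimage, Set.mem_setOf_eq]
    constructor <;> intro h <;> linarith
  rw [key lam, key lam']
  refine lintegral_mono fun r => ?_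
  exact gauss_shift_anti _ (Real.sqrt_nonneg lam) (Real.sqrt_le_sqrt hll)

instance stdGaussianPi_prob (n : ℕ) : IsProbabilityMeasure (stdGaussianPi n) := by
  unfold stdGaussianPi; infer_instance

instance ncChiSq_prob (k : ℕ) (lam : ℝ) : IsProbabilityMeasure (ncChiSq k lam) := by
  unfold ncChiSq
  exact Measure.isProbabilityMeasure_map (measurable_sq_sum _).aemeasurable

lemma ncChiSq_cdf_neg {k : ℕ} {lam x : ℝ} (hx : x < 0) : ncChiSq k lam (Set.Iic x) = 0 := by
  rw [ncChiSq_apply _ _ measurableSet_Iic]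
  have hempty : {z : Fin k → ℝ | (∑ i, (z i + if (i:ℕ) = 0 then Real.sqrt lam else 0)^2) ∈ Set.Iic x} = ∅ := by
    ext z
    simp only [Set.mem_setOf_eq, Set.mem_Iic, Set.mem_empty_iff_false, iff_false, not_le]
    calc x < 0 := hx
      _ ≤ _ := Finset.sum_nonneg fun i _ => sq_nonneg _
  rw [hempty]
  exact measure_empty

lemma quantileSet_nonempty (k : ℕ) (lam : ℝ) {β : ℝ} (hβ1 : β < 1) :
    {x : ℝ | ENNReal.ofReal β ≤ ncChiSq k lam (Set.Iic x)}.Nonempty := by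
  have ht := tendsto_measure_Iic_atTop (ncChiSq k lam)
  rw [measure_univ] at ht
  have hlt : ENNReal.ofReal β < 1 := ENNReal.ofReal_lt_one.mpr hβ1
  obtain ⟨x, hx⟩ := (Filter.Tendsto.eventually_const_le hlt ht).exists
  exact ⟨x, hx⟩

lemma quantileSet_pos {k : ℕ} {lam β : ℝ} (hβ0 : 0 < β) :
    ∀ x ∈ {x : ℝ | ENNReal.ofReal β ≤ ncChiSq k lam (Set.Iic x)}, 0 ≤ x := by
  intro x hx
  by_contra h
  push_neg at h
  rw [Set.mem_setOf_eq, ncChiSq_cdf_neg h] at hx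
  exact absurd hx (not_le.mpr (ENNReal.ofReal_pos.mpr hβ0))

lemma quantile_nonneg {k : ℕ} {lam β : ℝ} (hβ0 : 0 < β) (hβ1 : β < 1) :
    0 ≤ ncChiSqQuantile k lam β :=
  le_csInf (quantileSet_nonempty k lam hβ1) (quantileSet_pos hβ0)

lemma cdf_lt_of_lt_quantile {k : ℕ} {lam β x : ℝ} (hβ0 : 0 < β)
    (hx : x < ncChiSqQuantile k lam β) :
    ncChiSq k lam (Set.Iic x) < ENNReal.ofReal β := by
  by_contra h
  push_neg at h
  have hmem : x ∈ {x : ℝ | ENNReal.ofReal β ≤ ncChiSq k lam (Set.Iic x)} := h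
  have := csInf_le ⟨0, quantileSet_pos hβ0⟩ hmem
  exact absurd this (not_le.mpr hx)

lemma measure_Iio_quantile_le {k : ℕ} {lam β : ℝ} (hβ0 : 0 < β) :
    ncChiSq k lam (Set.Iio (ncChiSqQuantile k lam β)) ≤ ENNReal.ofReal β := by
  set q := ncChiSqQuantile k lam β with hq
  have hunion : Set.Iio q = ⋃ m : ℕ, Set.Iic (q - 1/(m+1)) := by
    ext y
    simp only [Set.mem_Iio, Set.mem_iUnion, Set.mem_Iic]
    constructor
    · intro hy
      obtain ⟨m, hm⟩ := exists_nat_one_div_lt (sub_pos.mpr hy)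
      exact ⟨m, by push_cast at hm ⊢; linarith⟩
    · intro ⟨m, hm⟩
      have : (0:ℝ) < 1/(m+1) := by positivity
      linarith
  rw [hunion]
  have hmono : Monotone (fun m : ℕ => Set.Iic (q - 1/(m+1))) := by
    intro a b hab
    apply Set.Iic_subset_Iic.mpr
    have ha : (0:ℝ) < (a:ℝ)+1 := by positivity
    have hb : (0:ℝ) < (b:ℝ)+1 := by positivity
    have hc : ((a:ℝ)) ≤ (b:ℝ) := Nat.cast_le.mpr hab
    have : (1:ℝ)/(b+1) ≤ 1/(a+1) := by
      apply div_le_div_of_nonneg_left (by norm_num) ha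
      linarith
    linarith
  refine le_of_tendsto (tendsto_measure_iUnion_atTop hmono) (Filter.Eventually.of_forall fun m => ?_)
  refine le_of_lt (cdf_lt_of_lt_quantile hβ0 ?_)
  have : (0:ℝ) < 1/((m:ℝ)+1) := by positivity
  linarith

lemma quantile_mono {n : ℕ} {lam lam' β : ℝ} (h0 : 0 ≤ lam) (hll : lam ≤ lam')
    (hβ0 : 0 < β) (hβ1 : β < 1) :
    ncChiSqQuantile (n+1) lam β ≤ ncChiSqQuantile (n+1) lam' β := by
  apply csInf_le_csInf ⟨0, quantileSet_pos hβ0⟩ (quantileSet_nonempty _ _ hβ1)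
  intro x hx
  exact le_trans hx (ncChiSq_cdf_anti h0 hll x)

lemma quantile_large {k : ℕ} (hk : k ≠ 0) {β : ℝ} (hβ0 : 0 < β) (hβ1 : β < 1) (M : ℝ) :
    ∃ δ : ℝ, 0 ≤ δ ∧ M ≤ ncChiSqQuantile k δ β := by
  haveI : NeZero k := ⟨hk⟩
  -- find t ≤ 0 with gaussian mass of Iic t below β
  have hiInter : (⋂ m : ℕ, Set.Iic (-(m:ℝ))) = ∅ := by
    ext y
    simp only [Set.mem_iInter, Set.mem_Iic, Set.mem_empty_iff_false, iff_false, not_forall, not_le]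
    obtain ⟨m, hm⟩ := exists_nat_gt (-y)
    exact ⟨m, by linarith⟩
  have htend := tendsto_measure_iInter_atTop (μ := gaussianReal 0 1)
    (fun m : ℕ => measurableSet_Iic.nullMeasurableSet)
    (fun a b hab => Set.Iic_subset_Iic.mpr (by push_cast; exact neg_le_neg (Nat.cast_le.mpr hab)))
    ⟨0, measure_ne_top _ _⟩
  rw [hiInter, measure_empty] at htend
  obtain ⟨m, hm⟩ := (htend.eventually_lt_const (ENNReal.ofReal_pos.mpr hβ0)).exists
  set t : ℝ := -(m:ℝ) with htdef
  have ht0 : t ≤ 0 := by simp [htdef]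
  set δ : ℝ := (Real.sqrt M - t)^2 with hδdef
  have hδ0 : 0 ≤ δ := sq_nonneg _
  have hsqrtδ : Real.sqrt δ = Real.sqrt M - t := by
    rw [hδdef, Real.sqrt_sq (by linarith [Real.sqrt_nonneg M])]
  refine ⟨δ, hδ0, ?_⟩
  -- CDF of the chi-square at M is at most the gaussian mass of Iic t
  have hcdf : ncChiSq k δ (Set.Iic M) ≤ gaussianReal 0 1 (Set.Iic t) := by
    rw [ncChiSq_apply _ _ measurableSet_Iic]
    have hsub : {z : Fin k → ℝ | (∑ i, (z i + if (i:ℕ) = 0 then Real.sqrt δ else 0)^2) ∈ Set.Iic M}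
        ⊆ {z : Fin k → ℝ | z 0 ≤ t} := by
      intro z hz
      simp only [Set.mem_setOf_eq, Set.mem_Iic] at hz ⊢
      have hsingle : (z 0 + Real.sqrt δ)^2 ≤ M := by
        calc (z 0 + Real.sqrt δ)^2
            = (z 0 + if ((0 : Fin k) : ℕ) = 0 then Real.sqrt δ else 0)^2 := by simp
          _ ≤ ∑ i, (z i + if (i:ℕ) = 0 then Real.sqrt δ else 0)^2 :=
              Finset.single_le_sum
                (f := fun i : Fin k => (z i + if (i:ℕ) = 0 then Real.sqrt δ else 0)^2)
                (fun i _ => sq_nonneg _) (Finset.mem_univ (0 : Fin k))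
          _ ≤ M := hz
      have h1 : z 0 + Real.sqrt δ ≤ Real.sqrt M := by
        calc z 0 + Real.sqrt δ ≤ |z 0 + Real.sqrt δ| := le_abs_self _
          _ = Real.sqrt ((z 0 + Real.sqrt δ)^2) := (Real.sqrt_sq_eq_abs _).symm
          _ ≤ Real.sqrt M := Real.sqrt_le_sqrt hsingle
      rw [hsqrtδ] at h1
      linarith
    calc stdGaussianPi k {z | (∑ i, (z i + if (i:ℕ) = 0 then Real.sqrt δ else 0)^2) ∈ Set.Iic M}
        ≤ stdGaussianPi k {z : Fin k → ℝ | z 0 ≤ t} := measure_mono hsub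
      _ = gaussianReal 0 1 (Set.Iic t) := by
          have hset : {z : Fin k → ℝ | z 0 ≤ t}
              = Set.univ.pi (fun i : Fin k => if i = 0 then Set.Iic t else Set.univ) := by
            ext z
            simp only [Set.mem_setOf_eq, Set.mem_pi, Set.mem_univ, forall_true_left]
            constructor
            · intro h i
              by_cases hi : i = 0
              · subst hi; simpa using h
              · simp [hi]
            · intro h
              have := h 0
              simpa using this
          rw [hset]
          show Measure.pi _ _ = _
          rw [Measure.pi_pi]
          rw [Finset.prod_eq_single (0 : Fin k)
            (fun i _ hi => by simp [hi])
            (fun h => absurd (Finset.mem_univ _) h)]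
          simp
  apply le_csInf (quantileSet_nonempty _ _ hβ1)
  intro x hx
  by_contra hcon
  push_neg at hcon
  have hmm : ncChiSq k δ (Set.Iic x) ≤ ncChiSq k δ (Set.Iic M) :=
    measure_mono (Set.Iic_subset_Iic.mpr (le_of_lt hcon))
  have : ENNReal.ofReal β ≤ gaussianReal 0 1 (Set.Iic t) := le_trans hx (le_trans hmm hcdf)
  exact absurd this (not_le.mpr hm)

lemma ncChiSq_singleton {k : ℕ} (hk : k ≠ 0) (lam c : ℝ) : ncChiSq k lam {c} = 0 := by
  haveI : NeZero k := ⟨hk⟩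
  rw [ncChiSq_apply _ _ (measurableSet_singleton c)]
  have habs : stdGaussianPi k ≪ (volume : Measure (Fin k → ℝ)) := by
    rw [show stdGaussianPi k = Measure.pi (fun _ : Fin k => gaussianReal 0 1) from rfl,
      stdGaussianPi_eq_withDensity]
    exact withDensity_absolutelyContinuous _ _
  apply habs
  set e := EuclideanSpace.measurableEquiv (Fin k) with he
  set μ0 : Fin k → ℝ := fun i => if (i:ℕ) = 0 then Real.sqrt lam else 0 with hμ0
  set m' : EuclideanSpace ℝ (Fin k) := e.symm μ0 with hm'
  have hvol : (volume : Measure (Fin k → ℝ))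
      = (volume : Measure (EuclideanSpace ℝ (Fin k))).map e :=
    (EuclideanSpace.volume_preserving_symm_measurableEquiv_toLp (Fin k)).map_eq.symm
  have hmeas : MeasurableSet {z : Fin k → ℝ | (∑ i, (z i + μ0 i)^2) ∈ ({c} : Set ℝ)} :=
    (measurable_sq_sum _) (measurableSet_singleton c)
  rw [hvol, Measure.map_apply e.measurable hmeas]
  have hpre : ⇑e ⁻¹' {z : Fin k → ℝ | (∑ i, (z i + μ0 i)^2) ∈ ({c} : Set ℝ)}
      = {w : EuclideanSpace ℝ (Fin k) | ‖w + m'‖^2 = c} := by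
    ext w
    simp only [Set.mem_preimage, Set.mem_setOf_eq, Set.mem_singleton_iff]
    rw [← sq_sum_eq_normsq (w + m')]
    rfl
  rw [hpre]
  rcases lt_or_ge c 0 with hc | hc
  · have hempty : {w : EuclideanSpace ℝ (Fin k) | ‖w + m'‖^2 = c} = ∅ := by
      ext w
      simp only [Set.mem_setOf_eq, Set.mem_empty_iff_false, iff_false]
      intro h
      nlinarith [sq_nonneg ‖w + m'‖]
    rw [hempty]
    exact measure_empty
  · haveI : Nontrivial (EuclideanSpace ℝ (Fin k)) := by
      refine ⟨0, EuclideanSpace.single 0 1, fun h => ?_⟩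
      have := congrArg (fun w : EuclideanSpace ℝ (Fin k) => w 0) h
      simp at this
    have hsph : {w : EuclideanSpace ℝ (Fin k) | ‖w + m'‖^2 = c}
        = Metric.sphere (-m') (Real.sqrt c) := by
      ext w
      simp only [Set.mem_setOf_eq, Metric.mem_sphere, dist_eq_norm, sub_neg_eq_add]
      constructor
      · intro h
        rw [← h, Real.sqrt_sq (norm_nonneg _)]
      · intro h
        rw [h, Real.sq_sqrt hc]
    rw [hsph]
    exact Measure.addHaar_sphere volume _ _

instance obsLaw_prob (θ : ℕ → ℝ) (N : ℕ) : IsProbabilityMeasure (obsLaw θ N) := by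
  unfold obsLaw; infer_instance

lemma measurable_sqNorm (N : ℕ) : Measurable (sqNorm (n := N)) := by
  unfold sqNorm
  exact Finset.measurable_sum _ (fun i _ => (measurable_pi_apply i).pow_const 2)

/-- The key nonasymptotic coverage bound: for every `N ≥ 3`, the probability of the
event `{b_N ≤ W_N}` is at least `α`. -/
lemma james_stein_coverage_fixed (θ : ℕ → ℝ) {α : ℝ} (hα0 : 0 < α) (hα1 : α < 1)
    {N : ℕ} (hN3 : 3 ≤ N) :
    ENNReal.ofReal α ≤
      obsLaw θ N {y | jsB N (tauHat2 y) α y ≤ jsWin N θ (tauHat2 y) y} := by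
  obtain ⟨n, rfl⟩ : ∃ n, N = n + 1 := ⟨N - 1, by omega⟩
  set N := n + 1 with hNdef
  have hN0 : N ≠ 0 := by omega
  have hNR : (0:ℝ) < (N:ℝ) - 2 := by
    have : (3:ℝ) ≤ (N:ℝ) := by exact_mod_cast hN3
    linarith
  have hβ0 : 0 < (1 - α)/2 := by linarith
  have hβ1 : (1 - α)/2 < 1 := by linarith
  set L : ℝ := ∑ i : Fin N, θ i ^ 2 with hLdef
  have hL0 : 0 ≤ L := Finset.sum_nonneg fun i _ => sq_nonneg _
  set q1 : ℝ := ncChiSqQuantile N L ((1 - α)/2) with hq1def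
  set q2 : ℝ := ncChiSqQuantile N (L/4) ((1 - α)/2) with hq2def
  set A1 : Set (Fin N → ℝ) := {y | q1 < sqNorm y} with hA1def
  set A2 : Set (Fin N → ℝ) := {y | q2 ≤ ∑ i : Fin N, (y i - θ i / 2)^2} with hA2def
  have hVmeas : Measurable (fun y : Fin N → ℝ => ∑ i : Fin N, (y i - θ i / 2)^2) :=
    Finset.measurable_sum _ (fun i _ => ((measurable_pi_apply i).sub_const _).pow_const 2)
  have hA1m : MeasurableSet A1 := measurableSet_lt measurable_const (measurable_sqNorm N)
  have hA2m : MeasurableSet A2 := measurableSet_le measurable_const hVmeas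
  -- probability bounds on the complements
  have bound1 : obsLaw θ N A1ᶜ ≤ ENNReal.ofReal ((1 - α)/2) := by
    have hc : A1ᶜ = sqNorm ⁻¹' (Set.Iic q1) := by
      ext y; simp [hA1def, not_lt]
    rw [hc, ← Measure.map_apply (measurable_sqNorm N) measurableSet_Iic,
      obsLaw_map_sqNorm θ N hN0, ← hLdef]
    have hsplit : Set.Iic q1 ⊆ Set.Iio q1 ∪ {q1} := by
      intro x hx
      rcases lt_or_eq_of_le (Set.mem_Iic.mp hx) with h | h
      · exact Or.inl h
      · exact Or.inr (by simp [h])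
    calc ncChiSq N L (Set.Iic q1) ≤ ncChiSq N L (Set.Iio q1 ∪ {q1}) := measure_mono hsplit
      _ ≤ ncChiSq N L (Set.Iio q1) + ncChiSq N L {q1} := measure_union_le _ _
      _ ≤ ENNReal.ofReal ((1 - α)/2) + 0 := by
          exact add_le_add (measure_Iio_quantile_le hβ0) (le_of_eq (ncChiSq_singleton hN0 _ _))
      _ = ENNReal.ofReal ((1 - α)/2) := by rw [add_zero]
  have bound2 : obsLaw θ N A2ᶜ ≤ ENNReal.ofReal ((1 - α)/2) := by
    have hc : A2ᶜ = (fun y : Fin N → ℝ => ∑ i : Fin N, (y i - θ i / 2)^2) ⁻¹' (Set.Iio q2) := by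
      ext y; simp [hA2def, not_le]
    rw [hc, ← Measure.map_apply hVmeas measurableSet_Iio, obsLaw_map_half θ N hN0, ← hLdef]
    exact measure_Iio_quantile_le hβ0
  -- the good event implies the coverage event
  have hsub : A1 ∩ A2 ⊆ {y | jsB N (tauHat2 y) α y ≤ jsWin N θ (tauHat2 y) y} := by
    rintro y ⟨hy1, hy2⟩
    rw [hA1def, Set.mem_setOf_eq] at hy1
    rw [hA2def, Set.mem_setOf_eq] at hy2
    rw [Set.mem_setOf_eq]
    set t : ℝ := tauHat2 y with htdef
    have h1t : 1 + t = sqNorm y / ((N:ℝ) - 2) := by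
      rw [htdef]
      unfold tauHat2 sqNorm
      ring
    have hq1n : 0 ≤ q1 := quantile_nonneg hβ0 hβ1
    have hsy : 0 < sqNorm y := lt_of_le_of_lt hq1n hy1
    have h1tpos : 0 < 1 + t := by rw [h1t]; positivity
    -- L is in the admissible interval
    have hUL : L ≤ jsU N y ((1 - α)/2) := by
      unfold jsU
      apply le_csInf
      · obtain ⟨δ, hδ0, hδM⟩ := quantile_large hN0 hβ0 hβ1 (sqNorm y)
        exact ⟨δ, hδ0, hδM⟩
      · rintro δ ⟨hδ0, hδq⟩
        by_contra hcon
        push_neg at hcon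
        have := quantile_mono (n := n) hδ0 (le_of_lt hcon) hβ0 hβ1
        have : sqNorm y ≤ q1 := le_trans hδq this
        exact absurd hy1 (not_lt.mpr this)
    have hLmem : L ∈ Set.Icc 0 (jsU N y ((1 - α)/2)) := ⟨hL0, hUL⟩
    -- the infimum in jsB is bounded by the value at L
    have himg_bdd : BddBelow ((fun lam =>
        2 / (1 + t) * ncChiSqQuantile N (lam / 4) ((1 - α) / 2)
          - lam / (2 * (1 + t)) - sqNorm y / (1 + t) ^ 2) ''
        Set.Icc 0 (jsU N y ((1 - α) / 2))) := by
      refine ⟨-(jsU N y ((1 - α)/2)) / (2 * (1 + t)) - sqNorm y / (1 + t)^2, ?_⟩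
      rintro v ⟨lam, hlam, rfl⟩
      obtain ⟨hlam0, hlamU⟩ := hlam
      have hqn : 0 ≤ ncChiSqQuantile N (lam / 4) ((1 - α) / 2) := quantile_nonneg hβ0 hβ1
      have h2t : 0 < 2 * (1 + t) := by linarith
      have hterm1 : 0 ≤ 2 / (1 + t) * ncChiSqQuantile N (lam / 4) ((1 - α) / 2) := by positivity
      have hterm2 : -(jsU N y ((1 - α)/2)) / (2 * (1 + t)) ≤ -lam / (2 * (1 + t)) :=
        (div_le_div_iff_of_pos_right h2t).mpr (neg_le_neg hlamU)
      have hrw : -lam / (2 * (1 + t)) = -(lam / (2 * (1 + t))) := by ring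
      rw [hrw] at hterm2
      linarith
    have hval_mem : (2 / (1 + t) * ncChiSqQuantile N (L / 4) ((1 - α) / 2)
        - L / (2 * (1 + t)) - sqNorm y / (1 + t) ^ 2) ∈ ((fun lam =>
        2 / (1 + t) * ncChiSqQuantile N (lam / 4) ((1 - α) / 2)
          - lam / (2 * (1 + t)) - sqNorm y / (1 + t) ^ 2) ''
        Set.Icc 0 (jsU N y ((1 - α) / 2))) := ⟨L, hLmem, rfl⟩
    have hsInf_le := csInf_le himg_bdd hval_mem
    set c : ℝ := 1 / (1 + t) with hcdef
    have hc0 : 0 < c := by positivity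
    have h1tne : (1 + t) ≠ 0 := ne_of_gt h1tpos
    have hwin : sqNorm (fun i => y i - θ i) - sqNorm (fun i => (1 - 1/(1+t)) * y i - θ i)
        = 2*c*(sqNorm y) - c^2*(sqNorm y) - 2*c*(∑ i : Fin N, θ i * y i) := by
      unfold sqNorm
      rw [← Finset.sum_sub_distrib]
      have hpt : ∀ i : Fin N, (y i - θ i)^2 - ((1 - 1/(1+t)) * y i - θ i)^2
          = 2*c*(y i)^2 - c^2*(y i)^2 - 2*c*(θ i * y i) := by
        intro i; rw [hcdef]; ring
      rw [Finset.sum_congr rfl fun i _ => hpt i, Finset.sum_sub_distrib,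
        Finset.sum_sub_distrib, ← Finset.mul_sum, ← Finset.mul_sum, ← Finset.mul_sum]
    have hVexp : ∑ i : Fin N, (y i - θ i/2)^2
        = sqNorm y - (∑ i : Fin N, θ i * y i) + L/4 := by
      unfold sqNorm
      rw [hLdef]
      have hpt : ∀ i : Fin N, (y i - θ i/2)^2 = ((y i)^2 - θ i * y i) + (θ i)^2/4 :=
        fun i => by ring
      rw [Finset.sum_congr rfl fun i _ => hpt i, Finset.sum_add_distrib,
        Finset.sum_sub_distrib, Finset.sum_div]
    have hq2y : q2 ≤ sqNorm y - (∑ i : Fin N, θ i * y i) + L/4 := by rw [← hVexp]; exact hy2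
    have hcore : 2 / (1 + t) * ncChiSqQuantile N (L / 4) ((1 - α) / 2)
        - L / (2 * (1 + t)) - sqNorm y / (1 + t) ^ 2
        ≤ sqNorm (fun i => y i - θ i) - sqNorm (fun i => (1 - 1/(1+t)) * y i - θ i) := by
      rw [hwin]
      have e1 : 2 / (1 + t) = 2 * c := by rw [hcdef]; ring
      have e2 : L / (2 * (1 + t)) = c * L / 2 := by
        rw [hcdef]
        field_simp
      have e3 : sqNorm y / (1 + t)^2 = c^2 * sqNorm y := by
        rw [hcdef, div_pow, one_pow, one_div, div_eq_mul_inv, mul_comm]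
      rw [e1, e2, e3, ← hq2def]
      have hmul := mul_le_mul_of_nonneg_left hq2y (by positivity : (0:ℝ) ≤ 2*c)
      nlinarith [hmul]
    unfold jsB jsWin
    exact mul_le_mul_of_nonneg_left (le_trans hsInf_le hcore)
      (inv_nonneg.mpr (Real.sqrt_nonneg _))
  -- assemble the probability bound
  have hsum := measure_add_measure_compl (μ := obsLaw θ N) (hA1m.inter hA2m)
  rw [measure_univ] at hsum
  have hcompl : obsLaw θ N (A1 ∩ A2)ᶜ ≤ ENNReal.ofReal (1 - α) := by
    rw [Set.compl_inter]
    calc obsLaw θ N (A1ᶜ ∪ A2ᶜ) ≤ obsLaw θ N A1ᶜ + obsLaw θ N A2ᶜ := measure_union_le _ _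
      _ ≤ ENNReal.ofReal ((1-α)/2) + ENNReal.ofReal ((1-α)/2) := add_le_add bound1 bound2
      _ = ENNReal.ofReal (1-α) := by
          rw [← ENNReal.ofReal_add (le_of_lt hβ0) (le_of_lt hβ0)]
          congr 1
          ring
  have hiner : obsLaw θ N (A1 ∩ A2) = 1 - obsLaw θ N (A1 ∩ A2)ᶜ :=
    ENNReal.eq_sub_of_add_eq (measure_ne_top _ _) hsum
  calc ENNReal.ofReal α = 1 - ENNReal.ofReal (1 - α) := by
        rw [← ENNReal.ofReal_one, ← ENNReal.ofReal_sub _ (by linarith : (0:ℝ) ≤ 1 - α)]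
        congr 1
        ring
    _ ≤ 1 - obsLaw θ N (A1 ∩ A2)ᶜ := tsub_le_tsub_left hcompl 1
    _ = obsLaw θ N (A1 ∩ A2) := hiner.symm
    _ ≤ obsLaw θ N {y | jsB N (tauHat2 y) α y ≤ jsWin N θ (tauHat2 y) y} := measure_mono hsub

end

noncomputable section

/-- **Theorem 5 (asymptotic coverage for the empirical Bayes/James–Stein bound).**
If `τ²_N = N⁻¹∑θ_n²` is bounded, then for every `α ∈ (0,1)`,
`liminf_N P[W_N ≥ b_N(Y_N, α)] ≥ α`, where the win `W_N` and the bound `b_N` are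
computed with the empirical Bayes variance estimate `τ̂²_N`. -/
theorem james_stein_asymptotic_coverage (θ : ℕ → ℝ)
    (hbdd : ∃ B : ℝ, ∀ N, tau2 θ N ≤ B) :
    ∀ α ∈ Set.Ioo (0 : ℝ) 1,
      ENNReal.ofReal α ≤
        Filter.atTop.liminf
          (fun N => obsLaw θ N {y | jsB N (tauHat2 y) α y ≤ jsWin N θ (tauHat2 y) y}) := by
  intro α hα
  obtain ⟨hα0, hα1⟩ := hα
  have hev : ∀ᶠ N in Filter.atTop, ENNReal.ofReal α ≤
      obsLaw θ N {y | jsB N (tauHat2 y) α y ≤ jsWin N θ (tauHat2 y) y} :=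
    Filter.eventually_atTop.mpr ⟨3, fun N hN => james_stein_coverage_fixed θ hα0 hα1 hN⟩
  calc ENNReal.ofReal α
      = Filter.atTop.liminf (fun _ : ℕ => ENNReal.ofReal α) := (Filter.liminf_const _).symm
    _ ≤ _ := Filter.liminf_le_liminf hev

end
end
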